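/- (Matching lower bound for the linear representation error) Let Σ₁, Σ₂ ∈ ℝ^{p×p} be symmetric with Λ(k; Σ₂) > 0 and RIP(k, Σ₁ − Σ₂) < Λ(k; Σ₂), and let Γ₁, Γ₂ ∈ ℝ^p. Then for any M ∈ 𝓜(k), ‖β_M(Σ₁, Γ₁) − β_M(Σ₂, Γ₂) − [Σ₂(M)]^{-1}(Γ₁(M) − Σ₁(M) β_M(Σ₂, Γ₂))‖₂ = ‖[Σ₂(M)]^{-1}(Σ₁(M) − Σ₂(M))(β_M(Σ₁, Γ₁) − β_M(Σ₂, Γ₂))‖₂ ≥ C_*(k, Σ₂) · Λ(k; Σ₁ − Σ₂) · ‖β_M(Σ₁, Γ₁) − β_M(Σ₂, Γ₂)‖₂, where C_*(k, Σ₂) := min_{M∈𝓜(k)} λ_min([Σ₂(M)]^{-1}) = [RIP(k, Σ₂)]^{-1}. -/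

import Mathlib

open scoped BigOperators
open MeasureTheory ProbabilityTheory Real Matrix

noncomputable section

/-- The Euclidean (`ℓ₂`) norm of a finitely indexed real vector. -/
def norm2 {ι : Type*} [Fintype ι] (v : ι → ℝ) : ℝ := Real.sqrt (∑ i, (v i) ^ 2)

/-- The `ℓ₁` norm of a finitely indexed real vector. -/
def norm1 {ι : Type*} [Fintype ι] (v : ι → ℝ) : ℝ := ∑ i, |v i|

/-- The `ℓ₂ → ℓ₂` operator norm of a square real matrix. -/
def opNorm {ι : Type*} [Fintype ι] (A : Matrix ι ι ℝ) : ℝ :=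
  sSup {r | ∃ x : ι → ℝ, norm2 x ≤ 1 ∧ r = norm2 (A.mulVec x)}

/-- The collection of models: nonempty subsets of `{1, …, p}` of cardinality at most `k`. -/
def Models (p k : ℕ) : Set (Finset (Fin p)) := {M | 1 ≤ M.card ∧ M.card ≤ k}

/-- The subvector of `v` with indices in the model `M`. -/
def subv {p : ℕ} (v : Fin p → ℝ) (M : Finset (Fin p)) : {x // x ∈ M} → ℝ := fun i => v i.1

/-- The submatrix of `A` with row and column indices in the model `M`. -/
def subm {p : ℕ} (A : Matrix (Fin p) (Fin p) ℝ) (M : Finset (Fin p)) :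
    Matrix {x // x ∈ M} {x // x ∈ M} ℝ := fun i j => A i.1 j.1

/-- `RIP(k, A)`: the maximal `k`-sparse operator norm `sup_{M ∈ 𝓜(k)} ‖A(M)‖_op`. -/
def RIP {p : ℕ} (k : ℕ) (A : Matrix (Fin p) (Fin p) ℝ) : ℝ :=
  ⨆ M : Models p k, opNorm (subm A M.1)

/-- `𝒟(k, v) = sup_{M ∈ 𝓜(k)} ‖v(M)‖₂`. -/
def Dnorm {p : ℕ} (k : ℕ) (v : Fin p → ℝ) : ℝ :=
  ⨆ M : Models p k, norm2 (subv v M.1)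

/-- `θ` has at most `k` nonzero coordinates. -/
def sparse {p : ℕ} (k : ℕ) (θ : Fin p → ℝ) : Prop := Set.ncard {j | θ j ≠ 0} ≤ k

/-- The minimal `k`-sparse eigenvalue
`Λ(k; A) = inf{θᵀAθ/‖θ‖₂² : θ ≠ 0, θ k-sparse}`. -/
def Lam {p : ℕ} (k : ℕ) (A : Matrix (Fin p) (Fin p) ℝ) : ℝ :=
  sInf {r | ∃ θ : Fin p → ℝ, θ ≠ 0 ∧ sparse k θ ∧ r = θ ⬝ᵥ A.mulVec θ / norm2 θ ^ 2}

/-- The linear regression map `β_M(Σ, Γ) = (Σ(M))⁻¹ Γ(M)`. -/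
def betaM {p : ℕ} (M : Finset (Fin p)) (S : Matrix (Fin p) (Fin p) ℝ) (G : Fin p → ℝ) :
    {x // x ∈ M} → ℝ := (subm S M)⁻¹.mulVec (subv G M)

/-- `S_{2,k}(Σ, Γ) = sup_{M ∈ 𝓜(k)} ‖β_M(Σ, Γ)‖₂`. -/
def S2k {p : ℕ} (k : ℕ) (S : Matrix (Fin p) (Fin p) ℝ) (G : Fin p → ℝ) : ℝ :=
  ⨆ M : Models p k, norm2 (betaM M.1 S G)

/-- `S_{1,k}(Σ, Γ) = sup_{M ∈ 𝓜(k)} ‖β_M(Σ, Γ)‖₁`. -/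
def S1k {p : ℕ} (k : ℕ) (S : Matrix (Fin p) (Fin p) ℝ) (G : Fin p → ℝ) : ℝ :=
  ⨆ M : Models p k, norm1 (betaM M.1 S G)

/-- The `k`-sparse Euclidean unit ball `Θ_k ⊆ ℝ^p`. -/
def Theta (p k : ℕ) : Set (Fin p → ℝ) := {θ | sparse k θ ∧ norm2 θ ≤ 1}

/-- The elementwise maximum norm `|||A|||_∞` of a matrix. -/
def normInfMat {p : ℕ} (A : Matrix (Fin p) (Fin p) ℝ) : ℝ :=
  ⨆ q : Fin p × Fin p, |A q.1 q.2|

/-- The supremum norm `‖v‖_∞` of a vector. -/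
def normInfVec {p : ℕ} (v : Fin p → ℝ) : ℝ := ⨆ j, |v j|

/-- The minimum eigenvalue of a symmetric matrix, as the infimum of the Rayleigh quotient. -/
def lamMin {ι : Type*} [Fintype ι] (A : Matrix ι ι ℝ) : ℝ :=
  sInf {r | ∃ x : ι → ℝ, x ≠ 0 ∧ r = x ⬝ᵥ A.mulVec x / norm2 x ^ 2}

/-- `C_*(k, Σ₂) := min_{M∈𝓜(k)} λ_min((Σ₂(M))⁻¹)`. -/
def Cstar {p : ℕ} (k : ℕ) (S : Matrix (Fin p) (Fin p) ℝ) : ℝ :=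
  sInf {r | ∃ M ∈ Models p k, r = lamMin ((subm S M)⁻¹)}

set_option linter.unusedSectionVars false
namespace StmtAux
open scoped RealInnerProductSpace

variable {ι : Type*} [Fintype ι] [DecidableEq ι]

def eE (x : ι → ℝ) : EuclideanSpace ℝ ι := (WithLp.equiv 2 (ι → ℝ)).symm x

lemma eE_coe (u : EuclideanSpace ℝ ι) : eE (⇑u) = u := rfl

lemma dot_eq_inner (x z : ι → ℝ) : x ⬝ᵥ z = ⟪eE x, eE z⟫ := by
  simp [eE, PiLp.inner_apply, dotProduct, RCLike.inner_apply, mul_comm]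

lemma norm2_eq (x : ι → ℝ) : norm2 x = ‖eE x‖ := by
  rw [EuclideanSpace.norm_eq]; simp [norm2, eE, sq_abs]

lemma norm2_nonneg (x : ι → ℝ) : 0 ≤ norm2 x := Real.sqrt_nonneg _

lemma norm2_pos {x : ι → ℝ} (hx : x ≠ 0) : 0 < norm2 x := by
  rw [norm2_eq]
  refine norm_pos_iff.2 (fun h => hx ?_)
  funext i
  have := congrArg (fun v : EuclideanSpace ℝ ι => v i) h
  simpa [eE] using this

lemma norm2_sq (x : ι → ℝ) : norm2 x ^ 2 = ∑ i, x i ^ 2 := by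
  rw [norm2, Real.sq_sqrt (by positivity)]

lemma norm2_neg (x : ι → ℝ) : norm2 (-x) = norm2 x := by
  simp [norm2]

lemma norm2_zero' : norm2 (0 : ι → ℝ) = 0 := by simp [norm2]

lemma cauchy_schwarz (x z : ι → ℝ) : x ⬝ᵥ z ≤ norm2 x * norm2 z := by
  rw [dot_eq_inner, norm2_eq, norm2_eq]
  exact real_inner_le_norm _ _

variable (B : Matrix ι ι ℝ) (b : OrthonormalBasis ι ℝ (EuclideanSpace ℝ ι)) (ν : ι → ℝ)

lemma repr_mulVec (hB : B.IsSymm) (hb : ∀ j, B *ᵥ ⇑(b j) = ν j • ⇑(b j)) (x : ι → ℝ) (j : ι) :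
    b.repr (eE (B *ᵥ x)) j = ν j * b.repr (eE x) j := by
  rw [OrthonormalBasis.repr_apply_apply, OrthonormalBasis.repr_apply_apply]
  rw [← eE_coe (b j), ← dot_eq_inner, ← dot_eq_inner]
  rw [Matrix.dotProduct_mulVec, ← Matrix.mulVec_transpose, show Bᵀ = B from hB, hb j]
  simp [smul_dotProduct]

lemma dot_repr (x z : ι → ℝ) :
    x ⬝ᵥ z = ∑ j, b.repr (eE x) j * b.repr (eE z) j :=
  calc x ⬝ᵥ z = ⟪eE x, eE z⟫ := dot_eq_inner x z
    _ = ⟪b.repr (eE x), b.repr (eE z)⟫ := (b.repr.inner_map_map _ _).symm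
    _ = ∑ j, b.repr (eE x) j * b.repr (eE z) j := by
        simp only [PiLp.inner_apply, RCLike.inner_apply, starRingEnd_apply, star_trivial]
        exact Finset.sum_congr rfl fun _ _ => mul_comm _ _

lemma sumsq_repr (x : ι → ℝ) : ∑ i, x i ^ 2 = ∑ j, (b.repr (eE x) j) ^ 2 := by
  have h := dot_repr b x x
  simpa [dotProduct, sq] using h

lemma dotB (hB : B.IsSymm) (hb : ∀ j, B *ᵥ ⇑(b j) = ν j • ⇑(b j)) (x : ι → ℝ) :
    x ⬝ᵥ (B *ᵥ x) = ∑ j, ν j * (b.repr (eE x) j) ^ 2 := by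
  rw [dot_repr b x (B *ᵥ x)]
  refine Finset.sum_congr rfl fun j _ => ?_
  rw [repr_mulVec B b ν hB hb x j]; ring

lemma sumsqB (hB : B.IsSymm) (hb : ∀ j, B *ᵥ ⇑(b j) = ν j • ⇑(b j)) (x : ι → ℝ) :
    ∑ i, ((B *ᵥ x) i) ^ 2 = ∑ j, (ν j * b.repr (eE x) j) ^ 2 := by
  rw [sumsq_repr b (B *ᵥ x)]
  refine Finset.sum_congr rfl fun j _ => ?_
  rw [repr_mulVec B b ν hB hb x j]

lemma norm2_basis (j : ι) : norm2 (⇑(b j)) = 1 := by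
  rw [norm2_eq, eE_coe]
  simp [b.orthonormal.1 j]

lemma basis_ne (j : ι) : (⇑(b j) : ι → ℝ) ≠ 0 := by
  intro h
  have h1 := norm2_basis b j
  rw [h] at h1
  simp [norm2] at h1

lemma dot_basis (hb : ∀ j, B *ᵥ ⇑(b j) = ν j • ⇑(b j)) (j : ι) :
    ⇑(b j) ⬝ᵥ (B *ᵥ ⇑(b j)) = ν j := by
  rw [hb j]
  have h1 : (⇑(b j) : ι → ℝ) ⬝ᵥ (ν j • ⇑(b j)) = ν j * (⇑(b j) ⬝ᵥ ⇑(b j)) := by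
    simp [dotProduct_smul]
  have h2 : (⇑(b j) : ι → ℝ) ⬝ᵥ ⇑(b j) = 1 := by
    have := norm2_sq (⇑(b j) : ι → ℝ)
    rw [norm2_basis b j] at this
    simpa [dotProduct, sq] using this.symm
  rw [h1, h2, mul_one]

lemma norm2_mulVec_basis (hb : ∀ j, B *ᵥ ⇑(b j) = ν j • ⇑(b j)) (j : ι) :
    norm2 (B *ᵥ ⇑(b j)) = |ν j| := by
  rw [hb j, norm2]
  have h0 : ∀ i, ((ν j • ⇑(b j) : ι → ℝ) i) ^ 2 = ν j ^ 2 * (⇑(b j) i) ^2 := by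
    intro i; simp [mul_pow]
  simp_rw [h0]
  rw [← Finset.mul_sum]
  have h2 : ∑ i, ((⇑(b j) : ι → ℝ) i) ^ 2 = 1 := by
    have := norm2_sq (⇑(b j) : ι → ℝ)
    rw [norm2_basis b j] at this; linarith [this]
  rw [h2, mul_one, Real.sqrt_sq_eq_abs]

lemma norm2_mulVec_le (hB : B.IsSymm) (hb : ∀ j, B *ᵥ ⇑(b j) = ν j • ⇑(b j))
    {c : ℝ} (hc0 : 0 ≤ c) (hc : ∀ j, |ν j| ≤ c) (x : ι → ℝ) :
    norm2 (B *ᵥ x) ≤ c * norm2 x := by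
  have key : ∑ i, ((B *ᵥ x) i) ^ 2 ≤ c ^ 2 * ∑ i, x i ^ 2 := by
    rw [sumsqB B b ν hB hb x, sumsq_repr b x, Finset.mul_sum]
    refine Finset.sum_le_sum fun j _ => ?_
    rw [mul_pow]
    refine mul_le_mul_of_nonneg_right ?_ (sq_nonneg _)
    calc ν j ^ 2 = |ν j| ^ 2 := (sq_abs _).symm
      _ ≤ c ^ 2 := by nlinarith [hc j, abs_nonneg (ν j)]
  calc norm2 (B *ᵥ x) = Real.sqrt (∑ i, ((B *ᵥ x) i) ^ 2) := rfl
    _ ≤ Real.sqrt (c ^ 2 * ∑ i, x i ^ 2) := Real.sqrt_le_sqrt key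
    _ = c * norm2 x := by
        rw [Real.sqrt_mul (sq_nonneg c), Real.sqrt_sq hc0, norm2]

lemma norm2_mulVec_ge (hB : B.IsSymm) (hb : ∀ j, B *ᵥ ⇑(b j) = ν j • ⇑(b j))
    {c : ℝ} (hc0 : 0 ≤ c) (hc : ∀ j, c ≤ |ν j|) (x : ι → ℝ) :
    c * norm2 x ≤ norm2 (B *ᵥ x) := by
  have key : c ^ 2 * ∑ i, x i ^ 2 ≤ ∑ i, ((B *ᵥ x) i) ^ 2 := by
    rw [sumsqB B b ν hB hb x, sumsq_repr b x, Finset.mul_sum]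
    refine Finset.sum_le_sum fun j _ => ?_
    rw [mul_pow]
    refine mul_le_mul_of_nonneg_right ?_ (sq_nonneg _)
    calc c ^ 2 ≤ |ν j| ^ 2 := by nlinarith [hc j]
      _ = ν j ^ 2 := sq_abs _
  calc c * norm2 x = Real.sqrt (c ^ 2 * ∑ i, x i ^ 2) := by
        rw [Real.sqrt_mul (sq_nonneg c), Real.sqrt_sq hc0, norm2]
    _ ≤ Real.sqrt (∑ i, ((B *ᵥ x) i) ^ 2) := Real.sqrt_le_sqrt key
    _ = norm2 (B *ᵥ x) := rfl

lemma ray_lower (hB : B.IsSymm) (hb : ∀ j, B *ᵥ ⇑(b j) = ν j • ⇑(b j))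
    {c : ℝ} (hc : ∀ j, c ≤ ν j) (x : ι → ℝ) :
    c * norm2 x ^ 2 ≤ x ⬝ᵥ (B *ᵥ x) := by
  rw [dotB B b ν hB hb, norm2_sq, sumsq_repr b x, Finset.mul_sum]
  exact Finset.sum_le_sum fun j _ => mul_le_mul_of_nonneg_right (hc j) (sq_nonneg _)

lemma isHermitian_of_isSymm {B : Matrix ι ι ℝ} (hB : B.IsSymm) : B.IsHermitian := by
  rwa [Matrix.IsHermitian, Matrix.conjTranspose_eq_transpose_of_trivial]

lemma exists_eigen {B : Matrix ι ι ℝ} (hB : B.IsSymm) :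
    ∃ (b : OrthonormalBasis ι ℝ (EuclideanSpace ℝ ι)) (ν : ι → ℝ),
      ∀ j, B *ᵥ ⇑(b j) = ν j • ⇑(b j) :=
  ⟨(isHermitian_of_isSymm hB).eigenvectorBasis, (isHermitian_of_isSymm hB).eigenvalues,
    (isHermitian_of_isSymm hB).mulVec_eigenvectorBasis⟩

lemma opNorm_char [Nonempty ι] (hB : B.IsSymm) (hb : ∀ j, B *ᵥ ⇑(b j) = ν j • ⇑(b j))
    (j₀ : ι) (hmax : ∀ j, |ν j| ≤ |ν j₀|) : opNorm B = |ν j₀| := by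
  have hub : ∀ r ∈ {r | ∃ x : ι → ℝ, norm2 x ≤ 1 ∧ r = norm2 (B.mulVec x)}, r ≤ |ν j₀| := by
    rintro r ⟨x, hx, rfl⟩
    calc norm2 (B *ᵥ x) ≤ |ν j₀| * norm2 x :=
          norm2_mulVec_le B b ν hB hb (abs_nonneg _) hmax x
      _ ≤ |ν j₀| * 1 := mul_le_mul_of_nonneg_left hx (abs_nonneg _)
      _ = |ν j₀| := mul_one _
  have hmem : |ν j₀| ∈ {r | ∃ x : ι → ℝ, norm2 x ≤ 1 ∧ r = norm2 (B.mulVec x)} :=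
    ⟨⇑(b j₀), le_of_eq (norm2_basis b j₀), (norm2_mulVec_basis B b ν hb j₀).symm⟩
  exact le_antisymm (csSup_le ⟨_, hmem⟩ hub) (le_csSup ⟨_, hub⟩ hmem)

lemma lamMin_char [Nonempty ι] (hB : B.IsSymm) (hb : ∀ j, B *ᵥ ⇑(b j) = ν j • ⇑(b j))
    (j₀ : ι) (hmin : ∀ j, ν j₀ ≤ ν j) : lamMin B = ν j₀ := by
  have hlb : ∀ r ∈ {r | ∃ x : ι → ℝ, x ≠ 0 ∧ r = x ⬝ᵥ B.mulVec x / norm2 x ^ 2}, ν j₀ ≤ r := by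
    rintro r ⟨x, hx, rfl⟩
    rw [le_div_iff₀ (pow_pos (norm2_pos hx) 2)]
    exact ray_lower B b ν hB hb hmin x
  have hmem : ν j₀ ∈ {r | ∃ x : ι → ℝ, x ≠ 0 ∧ r = x ⬝ᵥ B.mulVec x / norm2 x ^ 2} := by
    refine ⟨⇑(b j₀), basis_ne b j₀, ?_⟩
    rw [dot_basis B b ν hb j₀, norm2_basis b j₀]
    norm_num
  exact le_antisymm (csInf_le ⟨_, hlb⟩ hmem) (le_csInf ⟨_, hmem⟩ hlb)

lemma inv_eigen (hb : ∀ j, B *ᵥ ⇑(b j) = ν j • ⇑(b j)) (hdet : IsUnit B.det)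
    (hν : ∀ j, ν j ≠ 0) (j : ι) :
    B⁻¹ *ᵥ ⇑(b j) = (ν j)⁻¹ • ⇑(b j) := by
  have h1 : B⁻¹ *ᵥ (B *ᵥ ⇑(b j)) = B⁻¹ *ᵥ (ν j • ⇑(b j)) := by rw [hb j]
  rw [Matrix.mulVec_mulVec, Matrix.nonsing_inv_mul B hdet, Matrix.one_mulVec,
    Matrix.mulVec_smul] at h1
  have h2 : (ν j)⁻¹ • (ν j • (B⁻¹ *ᵥ ⇑(b j))) = (ν j)⁻¹ • ⇑(b j) := by rw [← h1]
  rwa [smul_smul, inv_mul_cancel₀ (hν j), one_smul] at h2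

/-- The main positive-definite package. -/
lemma pd_package [Nonempty ι] (B : Matrix ι ι ℝ) (hB : B.IsSymm) (L : ℝ) (hL : 0 < L)
    (hray : ∀ x : ι → ℝ, x ≠ 0 → L * norm2 x ^ 2 ≤ x ⬝ᵥ B *ᵥ x) :
    IsUnit B.det ∧ L ≤ opNorm B ∧ lamMin (B⁻¹) = (opNorm B)⁻¹ ∧
      (∀ w : ι → ℝ, (opNorm B)⁻¹ * norm2 w ≤ norm2 (B⁻¹ *ᵥ w)) := by
  classical
  have hH := isHermitian_of_isSymm hB
  set b := hH.eigenvectorBasis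
  set ν := hH.eigenvalues with hν_def
  have hb : ∀ j, B *ᵥ ⇑(b j) = ν j • ⇑(b j) := hH.mulVec_eigenvectorBasis
  have hpos : ∀ j, L ≤ ν j := by
    intro j
    have h1 := hray (⇑(b j)) (basis_ne b j)
    rwa [norm2_basis b j, one_pow, mul_one, dot_basis B b ν hb j] at h1
  have hνpos : ∀ j, 0 < ν j := fun j => lt_of_lt_of_le hL (hpos j)
  have hdet : IsUnit B.det := by
    rw [hH.det_eq_prod_eigenvalues]
    exact isUnit_iff_ne_zero.2 (Finset.prod_ne_zero_iff.2 fun j _ => (hνpos j).ne')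
  obtain ⟨j₀, hj₀⟩ := Finite.exists_max ν
  have habs : ∀ j, |ν j| = ν j := fun j => abs_of_pos (hνpos j)
  have hop : opNorm B = ν j₀ := by
    rw [← habs j₀]
    exact opNorm_char B b ν hB hb j₀ (fun j => by rw [habs, habs]; exact hj₀ j)
  have hBinv_symm : (B⁻¹).IsSymm := by
    rw [Matrix.IsSymm, Matrix.transpose_nonsing_inv, hB.eq]
  have hinv_eigen : ∀ j, B⁻¹ *ᵥ ⇑(b j) = (ν j)⁻¹ • ⇑(b j) :=
    inv_eigen B b ν hb hdet (fun j => (hνpos j).ne')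
  have hmininv : ∀ j, (ν j₀)⁻¹ ≤ (ν j)⁻¹ := fun j => inv_anti₀ (hνpos j) (hj₀ j)
  refine ⟨hdet, hop ▸ hpos j₀, ?_, ?_⟩
  · rw [lamMin_char (B⁻¹) b (fun j => (ν j)⁻¹) hBinv_symm hinv_eigen j₀ hmininv, hop]
  · intro w
    rw [hop]
    refine norm2_mulVec_ge (B⁻¹) b (fun j => (ν j)⁻¹) hBinv_symm hinv_eigen
      (inv_nonneg.2 (hνpos j₀).le) (fun j => ?_) w
    rw [abs_of_pos (inv_pos.2 (hνpos j))]
    exact hmininv j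

end StmtAux

namespace StmtAux
variable {p : ℕ} (M : Finset (Fin p))

def extv (x : {x // x ∈ M} → ℝ) : Fin p → ℝ := fun j => if h : j ∈ M then x ⟨j, h⟩ else 0

lemma sum_restrict (f : Fin p → ℝ) (hf : ∀ j ∉ M, f j = 0) :
    ∑ j, f j = ∑ i : {x // x ∈ M}, f i.1 := by
  rw [Finset.sum_coe_sort M (fun j => f j)]
  exact (Finset.sum_subset (Finset.subset_univ M) (fun j _ hj => hf j hj)).symm

lemma extv_mem (x : {x // x ∈ M} → ℝ) (i : {x // x ∈ M}) : extv M x i.1 = x i := by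
  simp [extv, i.2]

lemma extv_notmem (x : {x // x ∈ M} → ℝ) (j : Fin p) (hj : j ∉ M) : extv M x j = 0 := by
  simp [extv, hj]

lemma extv_sumsq (x : {x // x ∈ M} → ℝ) : ∑ j, (extv M x j) ^ 2 = ∑ i, (x i) ^ 2 := by
  rw [sum_restrict M _ (fun j hj => by rw [extv_notmem M x j hj]; ring)]
  exact Finset.sum_congr rfl fun i _ => by rw [extv_mem]

lemma extv_norm2 (x : {x // x ∈ M} → ℝ) : norm2 (extv M x) = norm2 x := by
  rw [norm2, norm2, extv_sumsq]

lemma extv_ne {x : {x // x ∈ M} → ℝ} (hx : x ≠ 0) : extv M x ≠ 0 := by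
  intro h
  apply hx
  funext i
  have := congrFun h i.1
  rwa [extv_mem] at this

lemma extv_sparse (k : ℕ) (hk : M.card ≤ k) (x : {x // x ∈ M} → ℝ) : sparse k (extv M x) := by
  have hsub : {j | extv M x j ≠ 0} ⊆ (M : Set (Fin p)) := by
    intro j hj
    by_contra hjM
    exact hj (extv_notmem M x j hjM)
  calc Set.ncard {j | extv M x j ≠ 0} ≤ Set.ncard (M : Set (Fin p)) :=
        Set.ncard_le_ncard hsub (Set.toFinite _)
    _ = M.card := Set.ncard_coe_finset M
    _ ≤ k := hk

lemma extv_dot (S : Matrix (Fin p) (Fin p) ℝ) (x : {x // x ∈ M} → ℝ) :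
    extv M x ⬝ᵥ (S *ᵥ extv M x) = x ⬝ᵥ ((subm S M) *ᵥ x) := by
  have hinner : ∀ j : Fin p, (S *ᵥ extv M x) j = ∑ i : {x // x ∈ M}, S j i.1 * x i := by
    intro j
    rw [Matrix.mulVec, dotProduct]
    rw [sum_restrict M (fun l => S j l * extv M x l)
      (fun l hl => by show S j l * extv M x l = 0; rw [extv_notmem M x l hl]; ring)]
    exact Finset.sum_congr rfl fun i _ => by rw [extv_mem]
  rw [dotProduct]
  rw [sum_restrict M (fun j => extv M x j * (S *ᵥ extv M x) j)
    (fun j hj => by show extv M x j * (S *ᵥ extv M x) j = 0; rw [extv_notmem M x j hj]; ring)]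
  refine Finset.sum_congr rfl fun i _ => ?_
  rw [extv_mem, hinner]
  rfl

lemma subm_sub (S1 S2 : Matrix (Fin p) (Fin p) ℝ) :
    subm (S1 - S2) M = subm S1 M - subm S2 M := rfl

lemma subm_symm {S : Matrix (Fin p) (Fin p) ℝ} (hS : S.IsSymm) : (subm S M).IsSymm := by
  ext i j
  exact hS.apply i.1 j.1

lemma models_nonempty {k : ℕ} {M : Finset (Fin p)} (hM : M ∈ Models p k) :
    Nonempty {x // x ∈ M} := by
  obtain ⟨a, ha⟩ := Finset.card_pos.1 hM.1
  exact ⟨⟨a, ha⟩⟩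

lemma Lam_le_dot {k : ℕ} {S : Matrix (Fin p) (Fin p) ℝ} (hS : S.IsSymm)
    {M : Finset (Fin p)} (hM : M ∈ Models p k) {x : {x // x ∈ M} → ℝ} (hx : x ≠ 0) :
    Lam k S * norm2 x ^ 2 ≤ x ⬝ᵥ ((subm S M) *ᵥ x) := by
  haveI hne := models_nonempty hM
  haveI : Nonempty (Fin p) := ⟨(Classical.arbitrary {x // x ∈ M}).1⟩
  obtain ⟨b, ν, hb⟩ := exists_eigen hS
  obtain ⟨j₀, hj₀⟩ := Finite.exists_min ν
  have hbdd : BddBelow {r | ∃ θ : Fin p → ℝ, θ ≠ 0 ∧ sparse k θ ∧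
      r = θ ⬝ᵥ S.mulVec θ / norm2 θ ^ 2} := by
    refine ⟨ν j₀, ?_⟩
    rintro r ⟨θ, hθ, _, rfl⟩
    rw [le_div_iff₀ (pow_pos (norm2_pos hθ) 2)]
    exact ray_lower S b ν hS hb hj₀ θ
  have hmem : (x ⬝ᵥ ((subm S M) *ᵥ x)) / norm2 x ^ 2 ∈ {r | ∃ θ : Fin p → ℝ, θ ≠ 0 ∧
      sparse k θ ∧ r = θ ⬝ᵥ S.mulVec θ / norm2 θ ^ 2} := by
    refine ⟨extv M x, extv_ne M hx, extv_sparse M k hM.2 x, ?_⟩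
    rw [extv_dot M S x, extv_norm2 M x]
  have h1 : Lam k S ≤ (x ⬝ᵥ ((subm S M) *ᵥ x)) / norm2 x ^ 2 := csInf_le hbdd hmem
  calc Lam k S * norm2 x ^ 2
      ≤ ((x ⬝ᵥ ((subm S M) *ᵥ x)) / norm2 x ^ 2) * norm2 x ^ 2 :=
        mul_le_mul_of_nonneg_right h1 (sq_nonneg _)
    _ = x ⬝ᵥ ((subm S M) *ᵥ x) := by
        field_simp [(norm2_pos hx).ne']

lemma opNorm_subm_le_RIP {k : ℕ} (A : Matrix (Fin p) (Fin p) ℝ)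
    {M : Finset (Fin p)} (hM : M ∈ Models p k) : opNorm (subm A M) ≤ RIP k A := by
  haveI : Nonempty (Models p k) := ⟨⟨M, hM⟩⟩
  exact le_ciSup (f := fun N : Models p k => opNorm (subm A N.1))
    (Set.Finite.bddAbove (Set.finite_range _)) (⟨M, hM⟩ : Models p k)

lemma ray_lower_neg_RIP {k : ℕ} {A : Matrix (Fin p) (Fin p) ℝ} (hA : A.IsSymm)
    {M : Finset (Fin p)} (hM : M ∈ Models p k) (x : {x // x ∈ M} → ℝ) :
    -(RIP k A) * norm2 x ^ 2 ≤ x ⬝ᵥ ((subm A M) *ᵥ x) := by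
  haveI := models_nonempty hM
  obtain ⟨b, ν, hb⟩ := exists_eigen (subm_symm M hA)
  obtain ⟨jm, hjm⟩ := Finite.exists_max (fun j => |ν j|)
  have hop : opNorm (subm A M) = |ν jm| := opNorm_char _ b ν (subm_symm M hA) hb jm hjm
  refine ray_lower _ b ν (subm_symm M hA) hb (fun j => ?_) x
  have h1 : |ν j| ≤ RIP k A := by
    calc |ν j| ≤ |ν jm| := hjm j
      _ = opNorm (subm A M) := hop.symm
      _ ≤ RIP k A := opNorm_subm_le_RIP A hM
  calc -(RIP k A) ≤ -|ν j| := neg_le_neg h1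
    _ ≤ ν j := neg_abs_le _

end StmtAux

/-- Matching lower bound for the linear representation error:
`C_*(k, Σ₂) = (RIP(k, Σ₂))⁻¹` and for any `M ∈ 𝓜(k)` the linear representation error equals
`‖(Σ₂(M))⁻¹(Σ₁(M) − Σ₂(M))(β_M(Σ₁,Γ₁) − β_M(Σ₂,Γ₂))‖₂`, which is at least
`C_*(k,Σ₂) Λ(k; Σ₁ − Σ₂) ‖β_M(Σ₁,Γ₁) − β_M(Σ₂,Γ₂)‖₂`. -/
theorem stmt8 {p : ℕ} (k : ℕ) (hk : 1 ≤ k)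
    (Sig1 Sig2 : Matrix (Fin p) (Fin p) ℝ) (hS1 : Sig1.IsSymm) (hS2 : Sig2.IsSymm)
    (G1 G2 : Fin p → ℝ)
    (hLam : 0 < Lam k Sig2)
    (hRIP : RIP k (Sig1 - Sig2) < Lam k Sig2) :
    Cstar k Sig2 = (RIP k Sig2)⁻¹ ∧
    ∀ M ∈ Models p k,
      norm2 (betaM M Sig1 G1 - betaM M Sig2 G2
          - (subm Sig2 M)⁻¹.mulVec
              (subv G1 M - (subm Sig1 M).mulVec (betaM M Sig2 G2))) =
        norm2 ((subm Sig2 M)⁻¹.mulVec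
          ((subm Sig1 M - subm Sig2 M).mulVec (betaM M Sig1 G1 - betaM M Sig2 G2))) ∧
      Cstar k Sig2 * Lam k (Sig1 - Sig2) * norm2 (betaM M Sig1 G1 - betaM M Sig2 G2) ≤
        norm2 (betaM M Sig1 G1 - betaM M Sig2 G2
          - (subm Sig2 M)⁻¹.mulVec
              (subv G1 M - (subm Sig1 M).mulVec (betaM M Sig2 G2))) := by
  classical
  have hpart1 : Cstar k Sig2 = (RIP k Sig2)⁻¹ := by
    by_cases hne : Nonempty (Models p k)
    · set g : Models p k → ℝ := fun N => opNorm (subm Sig2 N.1) with hg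
      have hpack : ∀ N : Models p k, IsUnit (subm Sig2 N.1).det ∧ Lam k Sig2 ≤ g N ∧
          lamMin ((subm Sig2 N.1)⁻¹) = (g N)⁻¹ ∧
          (∀ w, (g N)⁻¹ * norm2 w ≤ norm2 ((subm Sig2 N.1)⁻¹ *ᵥ w)) := by
        intro N
        haveI := StmtAux.models_nonempty N.2
        exact StmtAux.pd_package _ (StmtAux.subm_symm _ hS2) _ hLam
          (fun x hx => StmtAux.Lam_le_dot hS2 N.2 hx)
      obtain ⟨Mx, hMx⟩ := Finite.exists_max g
      have hgpos : ∀ N, 0 < g N := fun N => lt_of_lt_of_le hLam (hpack N).2.1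
      have hRIP2 : RIP k Sig2 = g Mx :=
        le_antisymm (ciSup_le hMx) (le_ciSup (Set.Finite.bddAbove (Set.finite_range g)) Mx)
      have hlb : ∀ r ∈ {r | ∃ M ∈ Models p k, r = lamMin ((subm Sig2 M)⁻¹)}, (g Mx)⁻¹ ≤ r := by
        intro r hr
        obtain ⟨N, hN, hr'⟩ := hr
        subst hr'
        rw [(hpack ⟨N, hN⟩).2.2.1]
        exact inv_anti₀ (hgpos ⟨N, hN⟩) (hMx ⟨N, hN⟩)
      have hmem : (g Mx)⁻¹ ∈ {r | ∃ M ∈ Models p k, r = lamMin ((subm Sig2 M)⁻¹)} :=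
        ⟨Mx.1, Mx.2, ((hpack Mx).2.2.1).symm⟩
      have hCeq : Cstar k Sig2 = (g Mx)⁻¹ :=
        le_antisymm (csInf_le ⟨_, hlb⟩ hmem) (le_csInf ⟨_, hmem⟩ hlb)
      rw [hCeq, hRIP2]
    · have h1 : {r | ∃ M ∈ Models p k, r = lamMin ((subm Sig2 M)⁻¹)} = ∅ := by
        ext r
        simp only [Set.mem_setOf_eq, Set.mem_empty_iff_false, iff_false, not_exists]
        intro N hN
        exact absurd ⟨⟨N, hN.1⟩⟩ hne
      haveI : IsEmpty (Models p k) := not_nonempty_iff.1 hne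
      rw [Cstar, h1, Real.sInf_empty, RIP, Real.iSup_of_isEmpty]
      norm_num
  refine ⟨hpart1, ?_⟩
  intro M hM
  haveI := StmtAux.models_nonempty hM
  have hAsym := StmtAux.subm_symm M hS1
  have hBsym := StmtAux.subm_symm M hS2
  have packB := StmtAux.pd_package (subm Sig2 M) hBsym (Lam k Sig2) hLam
    (fun x hx => StmtAux.Lam_le_dot hS2 hM hx)
  have hArayL : ∀ x : {x // x ∈ M} → ℝ, x ≠ 0 →
      (Lam k Sig2 - RIP k (Sig1 - Sig2)) * norm2 x ^ 2 ≤ x ⬝ᵥ (subm Sig1 M *ᵥ x) := by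
    intro x hx
    have h1 := StmtAux.Lam_le_dot hS2 hM hx
    have h2 := StmtAux.ray_lower_neg_RIP (hS1.sub hS2) hM x
    have h3 : x ⬝ᵥ (subm Sig1 M *ᵥ x)
        = x ⬝ᵥ (subm Sig2 M *ᵥ x) + x ⬝ᵥ (subm (Sig1 - Sig2) M *ᵥ x) := by
      rw [StmtAux.subm_sub, Matrix.sub_mulVec, dotProduct_sub]
      ring
    linarith
  have packA := StmtAux.pd_package (subm Sig1 M) hAsym _ (by linarith) hArayL
  have hdetA := packA.1
  have hdetB := packB.1
  have hAβ1 : subm Sig1 M *ᵥ (betaM M Sig1 G1) = subv G1 M := by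
    show subm Sig1 M *ᵥ ((subm Sig1 M)⁻¹ *ᵥ subv G1 M) = subv G1 M
    rw [Matrix.mulVec_mulVec, Matrix.mul_nonsing_inv _ hdetA, Matrix.one_mulVec]
  have hBinvB : ∀ u : {x // x ∈ M} → ℝ, (subm Sig2 M)⁻¹ *ᵥ (subm Sig2 M *ᵥ u) = u := by
    intro u
    rw [Matrix.mulVec_mulVec, Matrix.nonsing_inv_mul _ hdetB, Matrix.one_mulVec]
  have hkey : betaM M Sig1 G1 - betaM M Sig2 G2 - (subm Sig2 M)⁻¹.mulVec
        (subv G1 M - (subm Sig1 M).mulVec (betaM M Sig2 G2))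
      = -((subm Sig2 M)⁻¹.mulVec ((subm Sig1 M - subm Sig2 M).mulVec
        (betaM M Sig1 G1 - betaM M Sig2 G2))) := by
    have e2 : subm Sig1 M *ᵥ (betaM M Sig1 G1 - betaM M Sig2 G2)
        = subv G1 M - subm Sig1 M *ᵥ (betaM M Sig2 G2) := by
      rw [Matrix.mulVec_sub, hAβ1]
    have e1 : (subm Sig1 M - subm Sig2 M) *ᵥ (betaM M Sig1 G1 - betaM M Sig2 G2)
        = (subv G1 M - subm Sig1 M *ᵥ (betaM M Sig2 G2))
          - subm Sig2 M *ᵥ (betaM M Sig1 G1 - betaM M Sig2 G2) := by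
      rw [Matrix.sub_mulVec, e2]
    have e3 : (subm Sig2 M)⁻¹.mulVec ((subm Sig1 M - subm Sig2 M).mulVec
          (betaM M Sig1 G1 - betaM M Sig2 G2))
        = (subm Sig2 M)⁻¹.mulVec (subv G1 M - subm Sig1 M *ᵥ (betaM M Sig2 G2))
          - (betaM M Sig1 G1 - betaM M Sig2 G2) := by
      rw [e1, Matrix.mulVec_sub, hBinvB]
    rw [e3, neg_sub]
  refine ⟨by rw [hkey, StmtAux.norm2_neg], ?_⟩
  rw [hkey, StmtAux.norm2_neg]
  by_cases hv : betaM M Sig1 G1 - betaM M Sig2 G2 = 0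
  · rw [hv, Matrix.mulVec_zero, Matrix.mulVec_zero, StmtAux.norm2_zero']
    simp [StmtAux.norm2_zero']
  · have hnv := StmtAux.norm2_pos hv
    have hopB_ge : Lam k Sig2 ≤ opNorm (subm Sig2 M) := packB.2.1
    have hopB_le : opNorm (subm Sig2 M) ≤ RIP k Sig2 := StmtAux.opNorm_subm_le_RIP Sig2 hM
    have hRIPpos : 0 < RIP k Sig2 := lt_of_lt_of_le hLam (le_trans hopB_ge hopB_le)
    have hopBpos : 0 < opNorm (subm Sig2 M) := lt_of_lt_of_le hLam hopB_ge
    have hC_le : Cstar k Sig2 ≤ (opNorm (subm Sig2 M))⁻¹ := by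
      rw [hpart1]; exact inv_anti₀ hopBpos hopB_le
    have hC_pos : 0 < Cstar k Sig2 := by rw [hpart1]; exact inv_pos.2 hRIPpos
    have hNnn : 0 ≤ norm2 ((subm Sig2 M)⁻¹.mulVec ((subm Sig1 M - subm Sig2 M).mulVec
        (betaM M Sig1 G1 - betaM M Sig2 G2))) := StmtAux.norm2_nonneg _
    by_cases hLd : Lam k (Sig1 - Sig2) ≤ 0
    · have hmn : Cstar k Sig2 * Lam k (Sig1 - Sig2) ≤ 0 :=
        mul_nonpos_iff.2 (Or.inl ⟨hC_pos.le, hLd⟩)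
      calc Cstar k Sig2 * Lam k (Sig1 - Sig2) * norm2 (betaM M Sig1 G1 - betaM M Sig2 G2)
          ≤ 0 := mul_nonpos_iff.2 (Or.inr ⟨hmn, hnv.le⟩)
        _ ≤ _ := hNnn
    · push_neg at hLd
      have hw : Lam k (Sig1 - Sig2) * norm2 (betaM M Sig1 G1 - betaM M Sig2 G2)
          ≤ norm2 ((subm Sig1 M - subm Sig2 M) *ᵥ (betaM M Sig1 G1 - betaM M Sig2 G2)) := by
        have h1 := StmtAux.Lam_le_dot (hS1.sub hS2) hM hv
        rw [StmtAux.subm_sub] at h1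
        have h2 := StmtAux.cauchy_schwarz (betaM M Sig1 G1 - betaM M Sig2 G2)
          ((subm Sig1 M - subm Sig2 M) *ᵥ (betaM M Sig1 G1 - betaM M Sig2 G2))
        nlinarith [hnv]
      have hBinvw := packB.2.2.2
        ((subm Sig1 M - subm Sig2 M) *ᵥ (betaM M Sig1 G1 - betaM M Sig2 G2))
      nlinarith [mul_nonneg (sub_nonneg.2 hC_le) (mul_pos hLd hnv).le,
        mul_nonneg (inv_pos.2 hopBpos).le (sub_nonneg.2 hw), hBinvw]
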